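/- The Gross–Knuth reduction strategy, which at each step contracts all redexes of the current term simultaneously (a complete development), is cofinal: for every term M and every reduction sequence M →* N, there exists k such that N β-reduces to gk^k(M), the k-th iterate of the Gross–Knuth strategy applied to M. -/

import Mathlib

/-- Untyped λ-terms with de Bruijn indices (so α-equivalence is equality). -/
inductive Lam : Type
  | var : ℕ → Lam
  | app : Lam → Lam → Lam
  | lam : Lam → Lam
deriving DecidableEq, Repr

namespace Lam

/-- Lift (shift) free variables ≥ `d` by one. -/
def lift (d : ℕ) : Lam → Lam
  | var n => if n < d then var n else var (n + 1)
  | app s t => app (lift d s) (lift d t)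
  | lam t => lam (lift (d + 1) t)

/-- Substitute `u` for the variable with index `d`. -/
def subst (d : ℕ) (u : Lam) : Lam → Lam
  | var n => if n = d then u else if n < d then var n else var (n - 1)
  | app s t => app (subst d u s) (subst d u t)
  | lam t => lam (subst (d + 1) (lift 0 u) t)

/-- One-step β-reduction. -/
inductive Beta : Lam → Lam → Prop
  | beta (t u : Lam) : Beta (app (lam t) u) (subst 0 u t)
  | appL {s s' : Lam} (t : Lam) : Beta s s' → Beta (app s t) (app s' t)
  | appR (s : Lam) {t t' : Lam} : Beta t t' → Beta (app s t) (app s t')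
  | abs {t t' : Lam} : Beta t t' → Beta (lam t) (lam t')

/-- One-step η-reduction. -/
inductive Eta : Lam → Lam → Prop
  | eta (t : Lam) : Eta (lam (app (lift 0 t) (var 0))) t
  | appL {s s' : Lam} (t : Lam) : Eta s s' → Eta (app s t) (app s' t)
  | appR (s : Lam) {t t' : Lam} : Eta t t' → Eta (app s t) (app s t')
  | abs {t t' : Lam} : Eta t t' → Eta (lam t) (lam t')

/-- One-step βη-reduction. -/
def BetaEta (s t : Lam) : Prop := Beta s t ∨ Eta s t

/-- Multi-step β-reduction. -/
def BetaStar : Lam → Lam → Prop := Relation.ReflTransGen Beta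

/-- Multi-step βη-reduction. -/
def BetaEtaStar : Lam → Lam → Prop := Relation.ReflTransGen BetaEta

/-- β-conversion. -/
def BetaConv : Lam → Lam → Prop := Relation.EqvGen Beta

/-- βη-conversion. -/
def BetaEtaConv : Lam → Lam → Prop := Relation.EqvGen BetaEta

/-- All free variables have index < `d`. -/
def ClosedUnder : ℕ → Lam → Prop
  | d, var n => n < d
  | d, app s t => ClosedUnder d s ∧ ClosedUnder d t
  | d, lam t => ClosedUnder (d + 1) t

/-- A term is closed if it has no free variables. -/
def Closed (t : Lam) : Prop := ClosedUnder 0 t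

/-- β-normal form. -/
def BetaNF (t : Lam) : Prop := ∀ u, ¬ Beta t u

/-- βη-normal form. -/
def BetaEtaNF (t : Lam) : Prop := ∀ u, ¬ BetaEta t u

end Lam

namespace Lam

theorem lift_lift {e d : ℕ} (h : e ≤ d) (t : Lam) :
    lift (d+1) (lift e t) = lift e (lift d t) := by
  induction t generalizing e d with
  | var n =>
    simp only [lift]
    split_ifs <;> simp only [lift] <;> split_ifs <;>
      first | rfl | omega | (congr 1; omega)
  | app s t ihs iht => simp only [lift, ihs h, iht h]
  | lam t ih =>
    simp only [lift]
    rw [ih (by omega)]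

theorem lift_subst_le {e d : ℕ} (h : e ≤ d) (u t : Lam) :
    lift d (subst e u t) = subst e (lift d u) (lift (d+1) t) := by
  induction t generalizing e d u with
  | var n =>
    simp only [lift, subst]
    split_ifs <;> simp only [lift, subst] <;> split_ifs <;>
      first | rfl | omega | (congr 1; omega)
  | app s t ihs iht => simp only [lift, subst, ihs h, iht h]
  | lam t ih =>
    simp only [lift, subst]
    rw [ih (by omega), lift_lift (by omega)]

theorem lift_subst_ge {e d : ℕ} (h : d ≤ e) (u t : Lam) :
    lift d (subst e u t) = subst (e+1) (lift d u) (lift d t) := by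
  induction t generalizing e d u with
  | var n =>
    simp only [lift, subst]
    split_ifs <;> simp only [lift, subst] <;> split_ifs <;>
      first | rfl | omega | (congr 1; omega)
  | app s t ihs iht => simp only [lift, subst, ihs h, iht h]
  | lam t ih =>
    simp only [lift, subst]
    rw [ih (by omega), lift_lift (Nat.zero_le _)]

theorem subst_lift (d : ℕ) (u t : Lam) : subst d u (lift d t) = t := by
  induction t generalizing d u with
  | var n =>
    simp only [lift]
    split_ifs <;> simp only [subst] <;> split_ifs <;>
      first | rfl | (exfalso; omega) | (congr 1; omega)
  | app s t ihs iht => simp only [lift, subst, ihs, iht]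
  | lam t ih => simp only [lift, subst, ih]

theorem subst_subst {e d : ℕ} (h : e ≤ d) (u v t : Lam) :
    subst d u (subst e v t) = subst e (subst d u v) (subst (d+1) (lift e u) t) := by
  induction t generalizing e d u v with
  | var n =>
    simp only [subst]
    split_ifs <;> (try simp only [subst]) <;> (try split_ifs) <;>
      first | rfl | (exfalso; omega) | (rw [subst_lift]) | (congr 1; omega)
  | app s t ihs iht => simp only [subst, ihs h, iht h]
  | lam t ih =>
    simp only [subst]
    rw [ih (by omega), lift_subst_ge (Nat.zero_le _), lift_lift (Nat.zero_le _)]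


/-- Parallel reduction. -/
inductive Par : Lam → Lam → Prop
  | var (n : ℕ) : Par (var n) (var n)
  | app {s s' t t' : Lam} : Par s s' → Par t t' → Par (app s t) (app s' t')
  | abs {t t' : Lam} : Par t t' → Par (lam t) (lam t')
  | beta {t t' u u' : Lam} : Par t t' → Par u u' →
      Par (app (lam t) u) (subst 0 u' t')

theorem Par.refl (t : Lam) : Par t t := by
  induction t with
  | var n => exact Par.var n
  | app s t ihs iht => exact Par.app ihs iht
  | lam t ih => exact Par.abs ih

theorem Beta.toPar {s t : Lam} (h : Beta s t) : Par s t := by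
  induction h with
  | beta t u => exact Par.beta (Par.refl t) (Par.refl u)
  | appL t _ ih => exact Par.app ih (Par.refl t)
  | appR s _ ih => exact Par.app (Par.refl s) ih
  | abs _ ih => exact Par.abs ih

theorem BetaStar.appL {s s' : Lam} (t : Lam) (h : BetaStar s s') :
    BetaStar (app s t) (app s' t) :=
  Relation.ReflTransGen.lift (fun x => app x t) (fun _ _ hb => Beta.appL t hb) _ _ h

theorem BetaStar.appR (s : Lam) {t t' : Lam} (h : BetaStar t t') :
    BetaStar (app s t) (app s t') :=
  Relation.ReflTransGen.lift (fun x => app s x) (fun _ _ hb => Beta.appR s hb) _ _ h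

theorem BetaStar.abs {t t' : Lam} (h : BetaStar t t') :
    BetaStar (lam t) (lam t') :=
  Relation.ReflTransGen.lift lam (fun _ _ hb => Beta.abs hb) _ _ h

theorem Par.toBetaStar {s t : Lam} (h : Par s t) : BetaStar s t := by
  induction h with
  | var n => exact Relation.ReflTransGen.refl
  | app _ _ ihs iht => exact (BetaStar.appL _ ihs).trans (BetaStar.appR _ iht)
  | abs _ ih => exact BetaStar.abs ih
  | @beta a a' b b' _ _ iha ihb =>
    have h1 : BetaStar (Lam.app (Lam.lam a) b) (Lam.app (Lam.lam a') b') :=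
      (BetaStar.appL _ (BetaStar.abs iha)).trans (BetaStar.appR _ ihb)
    exact h1.tail (Beta.beta a' b')

theorem Par.lift {s t : Lam} (d : ℕ) (h : Par s t) : Par (lift d s) (lift d t) := by
  induction h generalizing d with
  | var n => simp only [Lam.lift]; split_ifs <;> exact Par.refl _
  | app hs ht ihs iht => exact Par.app (ihs d) (iht d)
  | abs _ ih => exact Par.abs (ih (d+1))
  | @beta a a' b b' _ _ iha ihb =>
    simp only [Lam.lift, lift_subst_le (Nat.zero_le d)]
    exact Par.beta (iha (d+1)) (ihb d)

theorem Par.subst {s s' u u' : Lam} (d : ℕ) (hs : Par s s') (hu : Par u u') :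
    Par (subst d u s) (subst d u' s') := by
  induction hs generalizing d u u' with
  | var n =>
    simp only [Lam.subst]; split_ifs <;> first | exact hu | exact Par.refl _
  | app _ _ ihs iht => exact Par.app (ihs d hu) (iht d hu)
  | abs _ ih => exact Par.abs (ih (d+1) (Par.lift 0 hu))
  | @beta a a' b b' _ _ iha ihb =>
    simp only [Lam.subst]
    rw [subst_subst (Nat.zero_le d)]
    exact Par.beta (iha (d+1) (Par.lift 0 hu)) (ihb d hu)

end Lam

open Lam

/-- The Gross–Knuth step: contract all β-redexes of the term simultaneously
(a complete development). -/
def gk : Lam → Lam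
  | Lam.var n => Lam.var n
  | Lam.lam t => Lam.lam (gk t)
  | Lam.app (Lam.lam t) u => Lam.subst 0 (gk u) (gk t)
  | Lam.app (Lam.var n) t => Lam.app (Lam.var n) (gk t)
  | Lam.app (Lam.app s₁ s₂) t => Lam.app (gk (Lam.app s₁ s₂)) (gk t)


theorem Par.triangle {s t : Lam} (h : Par s t) : Par t (gk s) := by
  induction h with
  | var n => exact Par.var n
  | @app s₁ s₁' t₁ t₁' hs ht ihs iht =>
    cases s₁ with
    | var n =>
      cases hs with
      | var => exact Par.app (Par.var n) iht
    | app a b =>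
      exact Par.app ihs iht
    | lam a =>
      cases hs with
      | abs ha =>
        cases ihs with
        | abs hga => exact Par.beta hga iht
  | abs _ ih => exact Par.abs ih
  | beta _ _ iha ihb => exact Par.subst 0 iha ihb

theorem gk_par {a b : Lam} (h : Par a b) : Par (gk a) (gk b) :=
  Par.triangle (Par.triangle h)

theorem gk_parStar {a b : Lam} (h : Relation.ReflTransGen Par a b) :
    Relation.ReflTransGen Par (gk a) (gk b) :=
  Relation.ReflTransGen.lift gk (fun _ _ hp => gk_par hp) _ _ h

theorem parStar_betaStar {a b : Lam} (h : Relation.ReflTransGen Par a b) :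
    BetaStar a b := by
  induction h with
  | refl => exact Relation.ReflTransGen.refl
  | tail _ h1 ih => exact ih.trans h1.toBetaStar


/-- The Gross–Knuth strategy is cofinal: every β-reduct `N` of `M` β-reduces
to some iterate `gk^[k] M` of the Gross–Knuth strategy applied to `M`. -/
theorem grossKnuth_cofinal (M N : Lam) (h : BetaStar M N) :
    ∃ k : ℕ, BetaStar N (gk^[k] M) := by
  have key : ∃ k : ℕ, Relation.ReflTransGen Par N (gk^[k] M) := by
    induction h with
    | refl => exact ⟨0, Relation.ReflTransGen.refl⟩
    | @tail c N' _ hcn ih =>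
      obtain ⟨k, hk⟩ := ih
      refine ⟨k + 1, ?_⟩
      have h1 : Par N' (gk c) := Par.triangle (Beta.toPar hcn)
      have h2 := gk_parStar hk
      rw [Function.iterate_succ_apply']
      exact (Relation.ReflTransGen.single h1).trans h2
  obtain ⟨k, hk⟩ := key
  exact ⟨k, parStar_betaStar hk⟩
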